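/- For a real n×n matrix A (n ≥ 2), let M(A) be the (n choose 2)×(n choose 2) matrix indexed by pairs (i,j) with i < j and (r,s) with r < s, with entries M(A)_{(i,j),(r,s)} := δ_{ir} A_{js} + δ_{js} A_{ir} − δ_{is} A_{jr} − δ_{jr} A_{is}. Then det(M(A)) is a guardian map in the weak sense: (i) if every complex eigenvalue of A has negative real part, then det(M(A)) ≠ 0; and (ii) if A has a purely imaginary nonzero eigenvalue iβ (β ∈ ℝ, β ≠ 0), then det(M(A)) = 0. -/

import Mathlib

open Matrix

/-- The bialternate sum of `A` with itself (equivalently, the second additive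
compound of `A`): the `(n choose 2) × (n choose 2)` matrix indexed by pairs
`i < j` and `r < s` with entries
`δ_{ir} A_{js} + δ_{js} A_{ir} − δ_{is} A_{jr} − δ_{jr} A_{is}`. -/
def bialternateSum {n : ℕ} {R : Type*} [Ring R] (A : Matrix (Fin n) (Fin n) R) :
    Matrix {p : Fin n × Fin n // p.1 < p.2} {p : Fin n × Fin n // p.1 < p.2} R :=
  fun p q =>
    (if p.val.1 = q.val.1 then A p.val.2 q.val.2 else 0) +
      (if p.val.2 = q.val.2 then A p.val.1 q.val.1 else 0) -
      (if p.val.1 = q.val.2 then A p.val.2 q.val.1 else 0) -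
      (if p.val.2 = q.val.1 then A p.val.1 q.val.2 else 0)

namespace BialternateAux

open Polynomial Finset

theorem sum_pairs_two (n : ℕ) (F : Fin n × Fin n → ℂ)
    (hsym : ∀ r s, F (s, r) = F (r, s)) (hdiag : ∀ r, F (r, r) = 0) :
    (2 : ℂ) * ∑ q : {p : Fin n × Fin n // p.1 < p.2}, F q.val
      = ∑ p : Fin n × Fin n, F p := by
  classical
  have hsub : ∑ p ∈ Finset.univ.filter (fun p : Fin n × Fin n => p.1 < p.2), F p
      = ∑ q : {p : Fin n × Fin n // p.1 < p.2}, F q.val :=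
    Finset.sum_subtype _ (by simp) F
  have hsplit := Finset.sum_filter_add_sum_filter_not Finset.univ
    (fun p : Fin n × Fin n => p.1 < p.2) F
  have hswap : ∑ p ∈ Finset.univ.filter (fun p : Fin n × Fin n => ¬ p.1 < p.2), F p
      = ∑ p ∈ Finset.univ.filter (fun p : Fin n × Fin n => p.1 < p.2), F p := by
    have h2 : ∑ p ∈ Finset.univ.filter (fun p : Fin n × Fin n => ¬ p.1 < p.2), F p
        = ∑ p ∈ Finset.univ.filter (fun p : Fin n × Fin n => p.2 < p.1), F p
          + ∑ p ∈ Finset.univ.filter (fun p : Fin n × Fin n => p.1 = p.2), F p := by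
      rw [← Finset.sum_filter_add_sum_filter_not
        (Finset.univ.filter (fun p : Fin n × Fin n => ¬ p.1 < p.2))
        (fun p : Fin n × Fin n => p.2 < p.1) F]
      congr 1
      · congr 1
        ext p
        simp only [Finset.mem_filter, Finset.mem_univ, true_and]
        omega
      · congr 1
        ext p
        simp only [Finset.mem_filter, Finset.mem_univ, true_and]
        constructor
        · rintro ⟨h1, h2⟩; omega
        · rintro h; omega
    rw [h2]
    have h3 : ∑ p ∈ Finset.univ.filter (fun p : Fin n × Fin n => p.1 = p.2), F p = 0 := by
      apply Finset.sum_eq_zero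
      intro p hp
      simp only [Finset.mem_filter, Finset.mem_univ, true_and] at hp
      have hpp : p = (p.1, p.1) := by ext <;> simp [hp.symm]
      rw [hpp]
      exact hdiag p.1
    rw [h3, add_zero]
    apply Finset.sum_nbij' (fun p => Prod.swap p) (fun p => Prod.swap p)
    · intro a ha; simp only [Finset.mem_filter, Finset.mem_univ, true_and] at *; exact ha
    · intro a ha; simp only [Finset.mem_filter, Finset.mem_univ, true_and] at *; exact ha
    · intro a _; simp
    · intro a _; simp
    · intro a _; rw [show Prod.swap a = (a.2, a.1) from rfl, hsym]
  rw [← hsub, two_mul, ← hsplit, hswap]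

theorem bridge {n : ℕ} (C W : Matrix (Fin n) (Fin n) ℂ)
    (hW0 : ∀ i, W i i = 0) (hWa : ∀ i j, W j i = -W i j)
    (p : {p : Fin n × Fin n // p.1 < p.2}) :
    (bialternateSum C).mulVec (fun q => W q.val.1 q.val.2) p
      = (C * W + W * Cᵀ) p.val.1 p.val.2 := by
  classical
  obtain ⟨⟨i, j⟩, hij⟩ := p
  set F : Fin n × Fin n → ℂ := fun q =>
    ((if i = q.1 then C j q.2 else 0) + (if j = q.2 then C i q.1 else 0) -
      (if i = q.2 then C j q.1 else 0) - (if j = q.1 then C i q.2 else 0)) * W q.1 q.2 with hF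
  have hsym : ∀ r s, F (s, r) = F (r, s) := by
    intro r s
    simp only [hF]
    rw [hWa s r]
    ring
  have hdiag : ∀ r, F (r, r) = 0 := by intro r; simp only [hF, hW0, mul_zero]
  have hmv : (bialternateSum C).mulVec (fun q => W q.val.1 q.val.2) ⟨(i, j), hij⟩
      = ∑ q : {p : Fin n × Fin n // p.1 < p.2}, F q.val := rfl
  have key := sum_pairs_two n F hsym hdiag
  have hfull : ∑ p : Fin n × Fin n, F p
      = 2 * ((C * W + W * Cᵀ) i j) := by
    rw [Fintype.sum_prod_type]
    simp only [hF, add_mul, sub_mul, ite_mul, zero_mul]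
    simp only [Finset.sum_add_distrib, Finset.sum_sub_distrib, Finset.sum_ite_irrel,
      Finset.sum_const_zero, Finset.sum_ite_eq, Finset.mem_univ, if_true]
    have e1 : ∀ k, W k i = -W i k := fun k => hWa i k
    have e2 : ∀ k, W j k = -W k j := fun k => hWa k j
    simp only [Matrix.add_apply, Matrix.mul_apply, Matrix.transpose_apply]
    have h3 : ∑ k, C j k * W k i = -∑ k, C j k * W i k := by
      simp only [e1, mul_neg, Finset.sum_neg_distrib]
    have h4 : ∑ k, C i k * W j k = -∑ k, C i k * W k j := by
      simp only [e2, mul_neg, Finset.sum_neg_distrib]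
    rw [h3, h4]
    have h5 : ∑ k, W i k * C j k = ∑ k, C j k * W i k := by
      apply Finset.sum_congr rfl; intros; ring
    rw [h5]
    ring
  rw [hmv]
  exact mul_left_cancel₀ two_ne_zero (key.trans hfull)

theorem aeval_commute {n : ℕ} (C D W : Matrix (Fin n) (Fin n) ℂ)
    (h : C * W = W * D) (q : ℂ[X]) :
    (aeval C q) * W = W * (aeval D q) := by
  have hpow : ∀ k : ℕ, C ^ k * W = W * D ^ k := by
    intro k
    induction k with
    | zero => simp
    | succ m ih => rw [pow_succ, pow_succ, mul_assoc, h, ← mul_assoc, ih, mul_assoc]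
  induction q using Polynomial.induction_on' with
  | add p q hp hq => simp [map_add, add_mul, mul_add, hp, hq]
  | monomial k a =>
    rw [aeval_monomial, aeval_monomial, mul_assoc, hpow, ← mul_assoc, ← mul_assoc,
      (Algebra.commutes a W).symm, mul_assoc]

theorem charpoly_eval' {n : ℕ} (M : Matrix (Fin n) (Fin n) ℂ) (r : ℂ) :
    M.charpoly.eval r = (r • (1 : Matrix (Fin n) (Fin n) ℂ) - M).det := by
  have h : Polynomial.eval r M.charpoly
      = ((Polynomial.evalRingHom r).mapMatrix (charmatrix M)).det := by
    rw [Matrix.charpoly]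
    exact RingHom.map_det (Polynomial.evalRingHom r) (charmatrix M)
  rw [h]
  congr 1
  ext i j
  by_cases hij : i = j
  · subst hij
    simp [charmatrix_apply_eq, Matrix.one_apply, Matrix.smul_apply, Matrix.sub_apply]
  · simp [charmatrix_apply_ne _ _ _ hij, Matrix.one_apply_ne hij, Matrix.smul_apply,
      Matrix.sub_apply]

theorem det_aeval_neg_transpose_ne_zero {n : ℕ} (C : Matrix (Fin n) (Fin n) ℂ)
    (hroots : ∀ z : ℂ, C.charpoly.IsRoot z → z.re < 0) :
    (aeval (-Cᵀ) C.charpoly).det ≠ 0 := by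
  set p := C.charpoly with hp
  have hmonic : p.Monic := C.charpoly_monic
  have hsplit : p.Splits := IsAlgClosed.splits p
  have hfact : p = (p.roots.toList.map fun a => X - Polynomial.C a).prod := by
    conv_lhs => rw [hsplit.eq_prod_roots_of_monic hmonic,
      ← Multiset.coe_toList p.roots]
    rw [Multiset.map_coe, Multiset.prod_coe]
  have haev : aeval (-Cᵀ) p
      = (p.roots.toList.map fun a => (-Cᵀ) - a • (1 : Matrix (Fin n) (Fin n) ℂ)).prod := by
    conv_lhs => rw [hfact]
    rw [map_list_prod]
    congr 1
    rw [List.map_map]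
    apply List.map_congr_left
    intro a _
    simp only [Function.comp_apply, map_sub, aeval_X, aeval_C,
      Algebra.algebraMap_eq_smul_one]
  rw [haev]
  have hdet : ((p.roots.toList.map fun a => (-Cᵀ) - a • (1 : Matrix (Fin n) (Fin n) ℂ)).prod).det
      = ((p.roots.toList.map fun a =>
          ((-Cᵀ) - a • (1 : Matrix (Fin n) (Fin n) ℂ)).det)).prod := by
    rw [show ∀ m : List (Matrix (Fin n) (Fin n) ℂ), m.prod.det = (m.map Matrix.det).prod from
      fun m => map_list_prod (Matrix.detMonoidHom) m, List.map_map]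
    rfl
  rw [hdet]
  apply List.prod_ne_zero
  intro hmem
  obtain ⟨a, ha, hza⟩ := List.mem_map.mp hmem
  rw [Multiset.mem_toList] at ha
  have h1 : (-Cᵀ) - a • (1 : Matrix (Fin n) (Fin n) ℂ)
      = ((-a) • (1 : Matrix (Fin n) (Fin n) ℂ) - C)ᵀ := by
    rw [Matrix.transpose_sub, Matrix.transpose_smul, Matrix.transpose_one]
    module
  have h2 : ((-Cᵀ) - a • (1 : Matrix (Fin n) (Fin n) ℂ)).det = p.eval (-a) := by
    rw [h1, Matrix.det_transpose, ← charpoly_eval']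
  rw [h2] at hza
  have hra : a.re < 0 := hroots a (isRoot_of_mem_roots ha)
  have hrna : (-a).re < 0 := hroots (-a) hza
  simp only [Complex.neg_re] at hrna
  linarith

theorem eval_map_star (q : Polynomial ℝ) (z : ℂ) :
    (q.map (algebraMap ℝ ℂ)).eval ((starRingEnd ℂ) z)
      = (starRingEnd ℂ) ((q.map (algebraMap ℝ ℂ)).eval z) := by
  induction q using Polynomial.induction_on' with
  | add p q hp hq => simp [hp, hq]
  | monomial k a =>
    simp [Polynomial.map_monomial, eval_monomial, _root_.map_mul, map_pow, Complex.conj_ofReal]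

theorem bialternateSum_map {n : ℕ} (A : Matrix (Fin n) (Fin n) ℝ) :
    bialternateSum (A.map (algebraMap ℝ ℂ)) = (bialternateSum A).map (algebraMap ℝ ℂ) := by
  ext p q
  simp only [bialternateSum, Matrix.map_apply, map_sub, map_add,
    apply_ite (algebraMap ℝ ℂ), map_zero]

/-- From a root of the (complexified) charpoly, an eigenvector. -/
theorem exists_eigenvector {n : ℕ} (C : Matrix (Fin n) (Fin n) ℂ) (z : ℂ)
    (hz : C.charpoly.IsRoot z) :
    ∃ x : Fin n → ℂ, x ≠ 0 ∧ C.mulVec x = z • x := by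
  classical
  have hdet : (C - z • (1 : Matrix (Fin n) (Fin n) ℂ)).det = 0 := by
    have h1 : C - z • (1 : Matrix (Fin n) (Fin n) ℂ)
        = -(z • (1 : Matrix (Fin n) (Fin n) ℂ) - C) := (neg_sub _ _).symm
    rw [h1, Matrix.det_neg, ← charpoly_eval' C z, hz.eq_zero, mul_zero]
  obtain ⟨x, hx0, hx⟩ := (Matrix.exists_mulVec_eq_zero_iff).mpr hdet
  refine ⟨x, hx0, ?_⟩
  have := hx
  rw [Matrix.sub_mulVec, Matrix.smul_mulVec, Matrix.one_mulVec, sub_eq_zero] at this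
  exact this

end BialternateAux

open BialternateAux Polynomial in
/-- `det(M(A))`, with `M(A)` the bialternate sum of `A` with itself, is a guardian
map in the weak sense: it is nonzero when all complex eigenvalues of `A` have
negative real part, and zero when `A` has a purely imaginary nonzero eigenvalue. -/
theorem det_bialternateSum_guardian (n : ℕ) (hn : 2 ≤ n)
    (A : Matrix (Fin n) (Fin n) ℝ) :
    ((∀ z : ℂ, (A.charpoly.map (algebraMap ℝ ℂ)).IsRoot z → z.re < 0) →
      (bialternateSum A).det ≠ 0) ∧
    ((∃ β : ℝ, β ≠ 0 ∧ (A.charpoly.map (algebraMap ℝ ℂ)).IsRoot (β * Complex.I)) →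
      (bialternateSum A).det = 0) := by
  classical
  set f : ℝ →+* ℂ := algebraMap ℝ ℂ with hf
  set C : Matrix (Fin n) (Fin n) ℂ := A.map f with hC
  have hcp : C.charpoly = A.charpoly.map f := Matrix.charpoly_map A f
  have hdetmap : ((bialternateSum C).det : ℂ) = f ((bialternateSum A).det) := by
    rw [hC, bialternateSum_map, ← RingHom.mapMatrix_apply, ← RingHom.map_det]
  constructor
  · -- part (i)
    intro hroots hdet0
    have hdetC : (bialternateSum C).det = 0 := by rw [hdetmap, hdet0, map_zero]
    obtain ⟨v, hv0, hmul⟩ := (Matrix.exists_mulVec_eq_zero_iff).mpr hdetC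
    set W : Matrix (Fin n) (Fin n) ℂ := Matrix.of fun i j =>
      if h : i < j then v ⟨(i, j), h⟩ else if h : j < i then -v ⟨(j, i), h⟩ else 0 with hW
    have hW0 : ∀ i, W i i = 0 := by
      intro i
      simp [hW, lt_irrefl]
    have hWa : ∀ i j, W j i = -W i j := by
      intro i j
      rcases lt_trichotomy i j with h | h | h
      · simp [hW, h, not_lt_of_gt h, lt_irrefl]
      · subst h; simp [hW, lt_irrefl]
      · simp [hW, h, not_lt_of_gt h, lt_irrefl]
    have hveq : (fun q : {p : Fin n × Fin n // p.1 < p.2} => W q.val.1 q.val.2) = v := by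
      funext q
      simp only [hW, Matrix.of_apply, dif_pos q.2]
    have hSzero : C * W + W * Cᵀ = 0 := by
      have hpairs : ∀ p : {p : Fin n × Fin n // p.1 < p.2},
          (C * W + W * Cᵀ) p.val.1 p.val.2 = 0 := by
        intro p
        rw [← bridge C W hW0 hWa p, hveq, hmul]
        rfl
      have hSa : ∀ i j, (C * W + W * Cᵀ) j i = -(C * W + W * Cᵀ) i j := by
        intro i j
        simp only [Matrix.add_apply, Matrix.mul_apply, Matrix.transpose_apply]
        have : ∀ k, W k i = -W i k := fun k => hWa i k
        have h2 : ∀ k, W j k = -W k j := fun k => hWa k j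
        rw [show ∑ k, C j k * W k i = -∑ k, C j k * W i k by
            simp only [this, mul_neg, Finset.sum_neg_distrib],
          show ∑ k, W j k * C i k = -∑ k, W k j * C i k by
            simp only [h2, neg_mul, Finset.sum_neg_distrib]]
        have h5 : ∑ k, C i k * W k j = ∑ k, W k j * C i k := by
          apply Finset.sum_congr rfl; intros; ring
        have h6 : ∑ k, W i k * C j k = ∑ k, C j k * W i k := by
          apply Finset.sum_congr rfl; intros; ring
        rw [h5, h6]
        ring
      ext i j
      rcases lt_trichotomy i j with h | h | h
      · exact hpairs ⟨(i, j), h⟩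
      · subst h
        rw [Matrix.zero_apply]
        linear_combination (hSa i i) / 2
      · rw [Matrix.zero_apply, hSa j i, hpairs ⟨(j, i), h⟩, neg_zero]
    have hCW : C * W = W * (-Cᵀ) := by
      rw [mul_neg]
      exact eq_neg_of_add_eq_zero_left hSzero
    have hcomm := aeval_commute C (-Cᵀ) W hCW C.charpoly
    rw [Matrix.aeval_self_charpoly, zero_mul] at hcomm
    have hdetne : ((aeval (-Cᵀ) C.charpoly)).det ≠ 0 := by
      apply det_aeval_neg_transpose_ne_zero
      intro z hz
      rw [hcp] at hz
      exact hroots z hz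
    have hWzero : W = 0 := by
      have hinv : IsUnit ((aeval (-Cᵀ) C.charpoly)).det := isUnit_iff_ne_zero.mpr hdetne
      calc W = W * (aeval (-Cᵀ) C.charpoly) * (aeval (-Cᵀ) C.charpoly)⁻¹ :=
              (Matrix.mul_nonsing_inv_cancel_right _ _ hinv).symm
        _ = 0 := by rw [← hcomm, zero_mul]
    apply hv0
    funext q
    have hq : W q.val.1 q.val.2 = 0 := by rw [hWzero]; rfl
    rw [← hveq]
    simpa using hq
  · -- part (ii)
    rintro ⟨β, hβ, hroot⟩
    set z : ℂ := (β : ℂ) * Complex.I with hz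
    have hzC : C.charpoly.IsRoot z := by rw [hcp]; exact hroot
    have hzC' : C.charpoly.IsRoot (-z) := by
      rw [hcp]
      have := eval_map_star A.charpoly z
      have hstar : (starRingEnd ℂ) z = -z := by
        simp [hz, Complex.ext_iff]
      rw [hstar] at this
      unfold Polynomial.IsRoot
      rw [this, hroot.eq_zero, map_zero]
    have hzne : z ≠ 0 := by
      simp [hz, Complex.ext_iff, hβ]
    obtain ⟨x, hx0, hx⟩ := exists_eigenvector C z hzC
    obtain ⟨y, hy0, hy⟩ := exists_eigenvector C (-z) hzC'
    set W : Matrix (Fin n) (Fin n) ℂ := Matrix.of fun i j => x i * y j - y i * x j with hW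
    have hW0 : ∀ i, W i i = 0 := by intro i; simp only [hW, Matrix.of_apply]; ring
    have hWa : ∀ i j, W j i = -W i j := by intro i j; simp only [hW, Matrix.of_apply]; ring
    have hSzero : C * W + W * Cᵀ = 0 := by
      ext i j
      simp only [Matrix.add_apply, Matrix.mul_apply, Matrix.transpose_apply, Matrix.zero_apply,
        hW, Matrix.of_apply]
      have hxi : ∀ k, ∑ l, C k l * x l = z * x k := by
        intro k
        have := congrFun hx k
        simpa [Matrix.mulVec, dotProduct] using this
      have hyi : ∀ k, ∑ l, C k l * y l = -z * y k := by
        intro k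
        have := congrFun hy k
        simpa [Matrix.mulVec, dotProduct] using this
      have e1 : ∑ k, C i k * (x k * y j - y k * x j)
          = (∑ l, C i l * x l) * y j - (∑ l, C i l * y l) * x j := by
        rw [Finset.sum_mul, Finset.sum_mul, ← Finset.sum_sub_distrib]
        apply Finset.sum_congr rfl; intros; ring
      have e2 : ∑ k, (x i * y k - y i * x k) * C j k
          = x i * (∑ l, C j l * y l) - y i * (∑ l, C j l * x l) := by
        rw [Finset.mul_sum, Finset.mul_sum, ← Finset.sum_sub_distrib]
        apply Finset.sum_congr rfl; intros; ring
      rw [e1, e2, hxi i, hyi i, hxi j, hyi j]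
      ring
    have hWne : W ≠ 0 := by
      intro hWzero
      obtain ⟨i₀, hi₀⟩ := Function.ne_iff.mp hx0
      have hxne : x i₀ ≠ 0 := by simpa using hi₀
      set c : ℂ := y i₀ / x i₀ with hc
      have hyx : y = c • x := by
        funext k
        have h1 : W i₀ k = 0 := by rw [hWzero]; rfl
        simp only [hW, Matrix.of_apply, sub_eq_zero] at h1
        show y k = c * x k
        rw [hc]
        field_simp
        linear_combination h1
      have h2 : C.mulVec y = c • (z • x) := by rw [hyx, Matrix.mulVec_smul, hx]
      have h4 : (-z) • (c • x) = c • (z • x) := by rw [← hyx, ← hy, h2]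
      have h5 := congrFun h4 i₀
      simp only [Pi.smul_apply, smul_eq_mul] at h5
      have h6 : c * (z * x i₀) * 2 = 0 := by linear_combination -h5
      have hc0 : c = 0 := by
        simp only [mul_eq_zero] at h6
        rcases h6 with (hc | hz0 | hx0') | h2z
        · exact hc
        · exact absurd hz0 hzne
        · exact absurd hx0' hxne
        · exact absurd h2z two_ne_zero
      apply hy0
      rw [hyx, hc0, zero_smul]
    have hex : ∃ i j, W i j ≠ 0 := by
      by_contra h
      push_neg at h
      exact hWne (by ext i j; simpa using h i j)
    obtain ⟨i, j, hWij⟩ := hex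
    have hexlt : ∃ q : {p : Fin n × Fin n // p.1 < p.2}, W q.val.1 q.val.2 ≠ 0 := by
      rcases lt_trichotomy i j with h | h | h
      · exact ⟨⟨(i, j), h⟩, hWij⟩
      · subst h; exact absurd (hW0 i) hWij
      · refine ⟨⟨(j, i), h⟩, ?_⟩
        show W j i ≠ 0
        rw [hWa i j]
        simpa using hWij
    obtain ⟨q0, hq0⟩ := hexlt
    set v : {p : Fin n × Fin n // p.1 < p.2} → ℂ := fun q => W q.val.1 q.val.2 with hv
    have hv0 : v ≠ 0 := by
      intro hcon
      apply hq0
      have := congrFun hcon q0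
      simpa [hv] using this
    have hmul : (bialternateSum C).mulVec v = 0 := by
      funext p
      rw [hv]
      rw [bridge C W hW0 hWa p, hSzero]
      rfl
    have hdetC : (bialternateSum C).det = 0 :=
      (Matrix.exists_mulVec_eq_zero_iff).mp ⟨v, hv0, hmul⟩
    have h0 : f ((bialternateSum A).det) = 0 := by rw [← hdetmap]; exact hdetC
    rwa [hf, Complex.coe_algebraMap, Complex.ofReal_eq_zero] at h0
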